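/- Let Bad_N := {x ∈ ℝ^N : ∃ c > 0 such that max_{1≤i≤N} ‖q·x_i‖ ≥ c·q^{−1/N} for all q ∈ ℕ}, where ‖·‖ denotes distance to the nearest integer. Let (ℝ^N,S,U,f) be any splitting structure on ℝ^N (with the sup-norm metric) such that d := dimH A_∞(B) > N−1 for the unit box B = [0,1]^N. Then Bad_N is ((d−N+1)/d)-Cantor-winning on B for this splitting structure. In particular, for the canonical splitting structure on ℝ^N the set Bad_N is (1/N)-Cantor-winning on B. -/

import Mathlib

open scoped Classical
open Filter Set

/-- A closed (metric) ball in a metric space, recorded by its centre and its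
(positive) radius. -/
structure SSBall (X : Type*) [MetricSpace X] where
  center : X
  radius : ℝ
  radius_pos : 0 < radius

namespace SSBall

variable {X : Type*} [MetricSpace X]

/-- The underlying set of points of a ball. -/
def toSet (B : SSBall X) : Set X := Metric.closedBall B.center B.radius

end SSBall

/-- A splitting structure `(X, S, U, f)` on a metric space `X`:
`U ⊆ ℕ` is an infinite multiplicatively closed set of positive integers, closed under
division of its elements; `f` is completely multiplicative on `U`; and `S` splits every
closed ball `B` into `f u` closed sub-balls of radius `rad(B)/u` whose centres are
`2 rad(B)/u`-separated, compatibly with multiplication in `U`. -/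
structure SplittingStructure (X : Type*) [MetricSpace X] where
  U : Set ℕ
  f : ℕ → ℕ
  S : SSBall X → ℕ → Finset (SSBall X)
  U_pos : ∀ u ∈ U, 0 < u
  U_infinite : U.Infinite
  mul_mem : ∀ u ∈ U, ∀ v ∈ U, u * v ∈ U
  div_mem : ∀ u ∈ U, ∀ v ∈ U, u ∣ v → v / u ∈ U
  f_pos : ∀ u ∈ U, 0 < f u
  f_mul : ∀ u ∈ U, ∀ v ∈ U, f (u * v) = f u * f v
  S_subset : ∀ B : SSBall X, ∀ u ∈ U, ∀ b ∈ S B u, b.toSet ⊆ B.toSet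
  S_radius : ∀ B : SSBall X, ∀ u ∈ U, ∀ b ∈ S B u, b.radius = B.radius / u
  S_card : ∀ B : SSBall X, ∀ u ∈ U, (S B u).card = f u
  S_sep : ∀ B : SSBall X, ∀ u ∈ U, ∀ b₁ ∈ S B u, ∀ b₂ ∈ S B u,
    b₁ ≠ b₂ → 2 * B.radius / u ≤ dist b₁.center b₂.center
  S_comp : ∀ B : SSBall X, ∀ u ∈ U, ∀ v ∈ U,
    S B (u * v) = (S B u).biUnion fun b => S b v

namespace SplittingStructure

variable {X : Type*} [MetricSpace X]

/-- `A_u(B)`, the union of the balls of `S(B,u)`. -/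
def Au (σ : SplittingStructure X) (B : SSBall X) (u : ℕ) : Set X :=
  ⋃ b ∈ σ.S B u, b.toSet

/-- The limit set `A_∞(B)`.  (For any sequence `(u_i)` in `U` with `u_i ∣ u_{i+1}` and
`u_i → ∞` the intersection `⋂_i A_{u_i}(B)` is independent of the sequence and coincides
with the intersection of all the sets `A_u(B)`, `u ∈ U`.) -/
def Ainfty (σ : SplittingStructure X) (B : SSBall X) : Set X :=
  ⋂ u ∈ σ.U, σ.Au B u

/-- A splitting structure is nontrivial if `f` is not identically `1` on `U`. -/
def Nontrivial (σ : SplittingStructure X) : Prop := ∃ u ∈ σ.U, σ.f u ≠ 1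

/-- `K` is a generalised `(B, ℛ, r)`-Cantor set for the splitting structure `σ`:
it arises from the iterative construction that starts with `𝓑 0 = {B}`, and in which
`𝓑 (n+1)` is obtained from the collection of candidate balls
`I_{n+1} = ⋃_{B' ∈ 𝓑 n} S(B', R n)` by removing, for each `k = 0, …, n` and each ball
`B'' ∈ 𝓑 (n-k)`, at most `r (n-k) n` balls lying in `S(B'', R_{n-k} ⋯ R_n)`
(the balls removed at stage `k` form the collection `E k`). -/
def IsGenCantor (σ : SplittingStructure X) (B : SSBall X) (R : ℕ → ℕ)
    (r : ℕ → ℕ → ℝ) (K : Set X) : Prop :=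
  ∃ 𝓑 : ℕ → Finset (SSBall X),
    𝓑 0 = {B} ∧
    (∀ n : ℕ, ∃ E : ℕ → Finset (SSBall X),
      (∀ k ≤ n, E k ⊆ (𝓑 (n - k)).biUnion fun B'' =>
          σ.S B'' (∏ i ∈ Finset.range (k + 1), R (n - i))) ∧
      (∀ k ≤ n, ∀ B'' ∈ 𝓑 (n - k),
        ((E k ∩ σ.S B'' (∏ i ∈ Finset.range (k + 1), R (n - i))).card : ℝ)
          ≤ r (n - k) n) ∧
      𝓑 (n + 1) = ((𝓑 n).biUnion fun B' => σ.S B' (R n)) \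
          (Finset.range (n + 1)).biUnion E) ∧
    K = ⋂ n, ⋃ b ∈ 𝓑 n, b.toSet

/-- `E` is `ε₀`-Cantor-winning on the ball `B` for the splitting structure `σ`. -/
def CantorWinningOn (σ : SplittingStructure X) (ε₀ : ℝ) (B : SSBall X)
    (E : Set X) : Prop :=
  ∀ ε : ℝ, 0 < ε → ε < ε₀ → ∃ Rε ∈ σ.U, ∀ R ∈ σ.U, Rε ≤ R →
    ∃ K : Set X,
      σ.IsGenCantor B (fun _ => R)
        (fun m n => (σ.f R : ℝ) ^ (((n : ℝ) - (m : ℝ) + 1) * (1 - ε))) K ∧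
      K ⊆ E

/-- `E` is `ε₀`-Cantor-winning for `σ` if it is `ε₀`-Cantor-winning on every ball. -/
def CantorWinning (σ : SplittingStructure X) (ε₀ : ℝ) (E : Set X) : Prop :=
  ∀ B : SSBall X, σ.CantorWinningOn ε₀ B E

end SplittingStructure

/-- Condition (S4) with an explicit constant `C`: no closed ball of `X` intersects more
than `C` pairwise disjoint open balls of the same radius as itself. -/
def CondS4With (X : Type*) [MetricSpace X] (C : ℕ) : Prop :=
  ∀ (x : X) (ρ : ℝ), 0 < ρ → ∀ T : Finset X,
    (∀ y ∈ T, (Metric.ball y ρ ∩ Metric.closedBall x ρ).Nonempty) →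
    (T : Set X).PairwiseDisjoint (fun y => Metric.ball y ρ) →
    T.card ≤ C

/-- Condition (S4). -/
def CondS4 (X : Type*) [MetricSpace X] : Prop := ∃ C : ℕ, CondS4With X C

/-- Condition (S5): for each `K > 1` there is a constant `C(K,X)` such that no ball of
radius `K·ρ` intersects more than `C(K,X)` pairwise disjoint open balls of radius `ρ`. -/
def CondS5 (X : Type*) [MetricSpace X] : Prop :=
  ∀ K : ℝ, 1 < K → ∃ C : ℕ, ∀ (x : X) (ρ : ℝ), 0 < ρ → ∀ T : Finset X,
    (∀ y ∈ T, (Metric.ball y ρ ∩ Metric.closedBall x (K * ρ)).Nonempty) →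
    (T : Set X).PairwiseDisjoint (fun y => Metric.ball y ρ) →
    T.card ≤ C

/-- The distance from a real number to the nearest integer, `‖x‖`. -/
noncomputable def intDist (x : ℝ) : ℝ := |x - round x|

/-- The set `Bad_N` of badly approximable points of `ℝ^N`: those `x` for which there is
`c > 0` with `max_{1 ≤ i ≤ N} ‖q xᵢ‖ ≥ c q^{-1/N}` for every positive integer `q`. -/
def badN (N : ℕ) : Set (Fin N → ℝ) :=
  {x | ∃ c : ℝ, 0 < c ∧ ∀ q : ℕ, 0 < q →
    ∃ i : Fin N, c * (q : ℝ) ^ (-(1 : ℝ) / (N : ℝ)) ≤ intDist ((q : ℝ) * x i)}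

/-- The unit box `[0,1]^N`, as a ball for the sup-norm metric on `ℝ^N`. -/
noncomputable def unitBox (N : ℕ) : SSBall (Fin N → ℝ) :=
  ⟨fun _ => (1 : ℝ) / 2, 1 / 2, by norm_num⟩

/-- The subbox of the box `B ⊆ ℝ^N` indexed by `i : Fin N → Fin u`, obtained when `B`
is cut into `u ^ N` equal subboxes. -/
noncomputable def canonicalPieceRN (N : ℕ) (B : SSBall (Fin N → ℝ)) (u : ℕ)
    (hu : 0 < u) (i : Fin N → Fin u) : SSBall (Fin N → ℝ) where
  center := fun j => B.center j - B.radius + (2 * ((i j : ℕ) : ℝ) + 1) * (B.radius / u)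
  radius := B.radius / u
  radius_pos := div_pos B.radius_pos (by exact_mod_cast hu)

/-- The canonical splitting structure on `ℝ^N`: `U = ℕ_{>0}`, `f u = u ^ N`, and
`S(B, u)` cuts the box `B` into `u ^ N` equal subboxes. -/
def IsCanonicalRN (N : ℕ) (σ : SplittingStructure (Fin N → ℝ)) : Prop :=
  σ.U = {u : ℕ | 0 < u} ∧
  (∀ u : ℕ, 0 < u → σ.f u = u ^ N) ∧
  ∀ (B : SSBall (Fin N → ℝ)) (u : ℕ) (hu : 0 < u),
    σ.S B u = Finset.image (canonicalPieceRN N B u hu) Finset.univ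




lemma sep_card {s : Finset ℝ} {δ L : ℝ} (hδ : 0 < δ) (hL : 0 ≤ L)
    (hsep : ∀ x ∈ s, ∀ y ∈ s, x ≠ y → δ ≤ |x - y|)
    (hdiam : ∀ x ∈ s, ∀ y ∈ s, |x - y| ≤ L) :
    (s.card : ℝ) ≤ L / δ + 1 := by
  rcases s.eq_empty_or_nonempty with rfl | hs
  · simp; positivity
  set x₀ := s.min' hs with hx₀
  have hx₀s : x₀ ∈ s := s.min'_mem hs
  have hinj : Set.InjOn (fun x => ⌊(x - x₀) / δ⌋) s := by
    intro x hx y hy hxy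
    by_contra hne
    have h1 : |(x - x₀) / δ - (y - x₀) / δ| < 1 := Int.abs_sub_lt_one_of_floor_eq_floor hxy
    rw [div_sub_div_same, show x - x₀ - (y - x₀) = x - y by ring, abs_div,
      abs_of_pos hδ, div_lt_one hδ] at h1
    exact absurd (hsep x hx y hy hne) (not_le.2 h1)
  have hmaps : ∀ x ∈ s, ⌊(x - x₀) / δ⌋ ∈ Finset.Icc (0 : ℤ) ⌊L / δ⌋ := by
    intro x hx
    refine Finset.mem_Icc.2 ⟨?_, ?_⟩
    · exact Int.floor_nonneg.2 (div_nonneg (by linarith [s.min'_le x hx]) hδ.le)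
    · refine Int.floor_le_floor ?_
      have hxL : x - x₀ ≤ L := by
        calc x - x₀ ≤ |x - x₀| := le_abs_self _
          _ ≤ L := hdiam x hx x₀ hx₀s
      exact (div_le_div_iff_of_pos_right hδ).mpr hxL
  have hcard : s.card ≤ (Finset.Icc (0 : ℤ) ⌊L / δ⌋).card := by
    classical
    calc s.card = (s.image (fun x => ⌊(x - x₀) / δ⌋)).card :=
          (Finset.card_image_of_injOn hinj).symm
      _ ≤ (Finset.Icc (0 : ℤ) ⌊L / δ⌋).card := by
          apply Finset.card_le_card
          intro z hz
          obtain ⟨x, hx, rfl⟩ := Finset.mem_image.1 hz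
          exact hmaps x hx
  have h2 : ((Finset.Icc (0 : ℤ) ⌊L / δ⌋).card : ℝ) ≤ L / δ + 1 := by
    rw [Int.card_Icc]
    have h3 : (0 : ℤ) ≤ ⌊L / δ⌋ := Int.floor_nonneg.2 (div_nonneg hL hδ.le)
    have h5 : (((⌊L / δ⌋ + 1 - 0).toNat : ℤ) : ℝ) = (⌊L / δ⌋ : ℝ) + 1 := by
      rw [show ((⌊L / δ⌋ + 1 - 0).toNat : ℤ) = ⌊L / δ⌋ + 1 by omega]
      push_cast; ring
    push_cast at h5 ⊢
    rw [h5]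
    linarith [Int.floor_le (L / δ)]
  calc (s.card : ℝ) ≤ ((Finset.Icc (0 : ℤ) ⌊L / δ⌋).card : ℝ) := by exact_mod_cast hcard
    _ ≤ L / δ + 1 := h2



/-- Counting separated points near a hyperplane slab inside a box. -/
lemma slab_count {N R : ℕ} (hN : 0 < N) {a : Fin N → ℝ} {t w ρ' : ℝ}
    (ha : ∑ i, |a i| = 1) (hw : 0 ≤ w) (hρ' : 0 < ρ') (hwρ : w ≤ ρ')
    {P : Finset (Fin N → ℝ)} {C : Fin N → ℝ}
    (hmem : ∀ x ∈ P, ∀ i, |x i - C i| ≤ ρ' * R)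
    (hsep : ∀ x ∈ P, ∀ y ∈ P, x ≠ y → 2 * ρ' ≤ dist x y)
    (hslab : ∀ x ∈ P, |(∑ i, a i * x i) - t| ≤ w + ρ') :
    P.card ≤ (3 * N + 1) * (R + 1) ^ (N - 1) := by
  -- find the coordinate with big |a|
  have hj : ∃ j, 1 / (N : ℝ) ≤ |a j| := by
    by_contra hcon
    push_neg at hcon
    have : (∑ i, |a i|) < ∑ _i : Fin N, 1 / (N : ℝ) :=
      Finset.sum_lt_sum_of_nonempty (by simp [Fin.pos_iff_nonempty.1 hN]) fun i _ => hcon i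
    rw [ha, Finset.sum_const, Finset.card_univ, Fintype.card_fin, nsmul_eq_mul,
      mul_one_div, div_self (by positivity)] at this
    exact lt_irrefl _ this
  obtain ⟨j₀, hj₀⟩ := hj
  have hNR : (0:ℝ) < N := by exact_mod_cast hN
  have haj₀ : 0 < |a j₀| := lt_of_lt_of_le (by positivity) hj₀
  -- the fibers map
  set g : (Fin N → ℝ) → (Fin N → ℤ) :=
    fun x i => if i = j₀ then 0 else ⌊(x i - C i + ρ' * R) / (2 * ρ')⌋ with hg
  -- fibers are small
  have hfiber : ∀ b ∈ P.image g, (P.filter (fun x => g x = b)).card ≤ 3 * N + 1 := by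
    intro b _
    set s := P.filter (fun x => g x = b) with hs
    have hsP : ∀ x ∈ s, x ∈ P := fun x hx => (Finset.mem_filter.1 hx).1
    -- within a fiber, coordinates ≠ j₀ differ by < 2ρ'
    have hclose : ∀ x ∈ s, ∀ y ∈ s, ∀ i, i ≠ j₀ → |x i - y i| < 2 * ρ' := by
      intro x hx y hy i hi
      have hgx := (Finset.mem_filter.1 hx).2
      have hgy := (Finset.mem_filter.1 hy).2
      have : ⌊(x i - C i + ρ' * R) / (2 * ρ')⌋ = ⌊(y i - C i + ρ' * R) / (2 * ρ')⌋ := by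
        have := congrFun (hgx.trans hgy.symm) i
        simpa [hg, hi] using this
      have h1 : |(x i - C i + ρ' * R) / (2 * ρ') - (y i - C i + ρ' * R) / (2 * ρ')| < 1 :=
        Int.abs_sub_lt_one_of_floor_eq_floor this
    -- simplify
      rw [div_sub_div_same, show x i - C i + ρ' * R - (y i - C i + ρ' * R) = x i - y i by ring,
        abs_div, abs_of_pos (show (0:ℝ) < 2 * ρ' by linarith),
        div_lt_one (show (0:ℝ) < 2 * ρ' by linarith)] at h1
      exact h1
    -- so the separation is realised in coordinate j₀
    have hj₀sep : ∀ x ∈ s, ∀ y ∈ s, x ≠ y → 2 * ρ' ≤ |x j₀ - y j₀| := by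
      intro x hx y hy hne
      have hd := hsep x (hsP x hx) y (hsP y hy) hne
      by_contra hlt
      push_neg at hlt
      have : dist x y < 2 * ρ' := by
        rw [dist_pi_lt_iff (by linarith)]
        intro i
        rcases eq_or_ne i j₀ with rfl | hi
        · rwa [Real.dist_eq]
        · rw [Real.dist_eq]; exact hclose x hx y hy i hi
      linarith
    -- and coordinate j₀ differences are bounded
    have hj₀diam : ∀ x ∈ s, ∀ y ∈ s, |x j₀ - y j₀| ≤ 6 * N * ρ' := by
      intro x hx y hy
      have hx' := hslab x (hsP x hx)
      have hy' := hslab y (hsP y hy)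
      have h1 : |∑ i, a i * x i - ∑ i, a i * y i| ≤ 2 * (w + ρ') := by
        have := abs_sub (∑ i, a i * x i - t) (∑ i, a i * y i - t)
        calc |∑ i, a i * x i - ∑ i, a i * y i|
            = |(∑ i, a i * x i - t) - (∑ i, a i * y i - t)| := by ring_nf
          _ ≤ |∑ i, a i * x i - t| + |∑ i, a i * y i - t| := abs_sub _ _
          _ ≤ 2 * (w + ρ') := by linarith
      have h2 : ∑ i, a i * x i - ∑ i, a i * y i = ∑ i, a i * (x i - y i) := by
        rw [← Finset.sum_sub_distrib]; congr 1; ext i; ring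
      -- split off j₀
      have h3 : |a j₀ * (x j₀ - y j₀)| ≤ |∑ i, a i * (x i - y i)| +
          |∑ i ∈ Finset.univ.erase j₀, a i * (x i - y i)| := by
        have : a j₀ * (x j₀ - y j₀) = (∑ i, a i * (x i - y i)) -
            ∑ i ∈ Finset.univ.erase j₀, a i * (x i - y i) := by
          rw [← Finset.add_sum_erase _ _ (Finset.mem_univ j₀)]; ring
        rw [this]
        exact abs_sub _ _
      have h4 : |∑ i ∈ Finset.univ.erase j₀, a i * (x i - y i)| ≤ 2 * ρ' := by
        calc |∑ i ∈ Finset.univ.erase j₀, a i * (x i - y i)|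
            ≤ ∑ i ∈ Finset.univ.erase j₀, |a i * (x i - y i)| := Finset.abs_sum_le_sum_abs _ _
          _ ≤ ∑ i ∈ Finset.univ.erase j₀, |a i| * (2 * ρ') := by
              apply Finset.sum_le_sum
              intro i hi
              rw [abs_mul]
              exact mul_le_mul_of_nonneg_left
                (hclose x hx y hy i (Finset.mem_erase.1 hi).1).le (abs_nonneg _)
          _ = (∑ i ∈ Finset.univ.erase j₀, |a i|) * (2 * ρ') := by
              rw [Finset.sum_mul]
          _ ≤ 1 * (2 * ρ') := by
              apply mul_le_mul_of_nonneg_right _ (by linarith)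
              rw [← ha]
              exact Finset.sum_le_sum_of_subset_of_nonneg (Finset.erase_subset _ _)
                (fun _ _ _ => abs_nonneg _)
          _ = 2 * ρ' := one_mul _
      have h5 : |a j₀| * |x j₀ - y j₀| ≤ 6 * ρ' := by
        rw [← abs_mul]
        calc |a j₀ * (x j₀ - y j₀)| ≤ |∑ i, a i * (x i - y i)| +
            |∑ i ∈ Finset.univ.erase j₀, a i * (x i - y i)| := h3
          _ ≤ 2 * (w + ρ') + 2 * ρ' := by rw [← h2]; linarith
          _ ≤ 6 * ρ' := by linarith
      -- divide by |a j₀| ≥ 1/N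
      have h6 : (1 / (N:ℝ)) * |x j₀ - y j₀| ≤ 6 * ρ' :=
        le_trans (mul_le_mul_of_nonneg_right hj₀ (abs_nonneg _)) h5
      calc |x j₀ - y j₀| = (N:ℝ) * ((1 / N) * |x j₀ - y j₀|) := by
            field_simp
        _ ≤ (N:ℝ) * (6 * ρ') := mul_le_mul_of_nonneg_left h6 hNR.le
        _ = 6 * N * ρ' := by ring
    -- apply the 1-D counting to the image of coordinate j₀
    have hinj : Set.InjOn (fun x : Fin N → ℝ => x j₀) s := by
      intro x hx y hy hxy
      by_contra hne
      have h := hj₀sep x hx y hy hne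
      have hxy' : x j₀ = y j₀ := hxy
      rw [hxy', sub_self, abs_zero] at h
      linarith
    have hcards : (s.card : ℝ) = ((s.image (fun x => x j₀)).card : ℝ) := by
      rw [Finset.card_image_of_injOn hinj]
    have := sep_card (s := s.image (fun x => x j₀)) (δ := 2 * ρ') (L := 6 * N * ρ')
      (by linarith) (by nlinarith) ?_ ?_
    · rw [← hcards] at this
      have h7 : (6 * (N:ℝ) * ρ') / (2 * ρ') + 1 = 3 * N + 1 := by
        field_simp; ring
      rw [h7] at this
      exact_mod_cast this
    · intro u hu v hv huv
      obtain ⟨x, hx, rfl⟩ := Finset.mem_image.1 hu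
      obtain ⟨y, hy, rfl⟩ := Finset.mem_image.1 hv
      exact hj₀sep x hx y hy (fun h => huv (by rw [h]))
    · intro u hu v hv
      obtain ⟨x, hx, rfl⟩ := Finset.mem_image.1 hu
      obtain ⟨y, hy, rfl⟩ := Finset.mem_image.1 hv
      exact hj₀diam x hx y hy
  -- the image is small
  have himage : (P.image g).card ≤ (R + 1) ^ (N - 1) := by
    have hsub : P.image g ⊆ Fintype.piFinset
        (fun i : Fin N => if i = j₀ then ({0} : Finset ℤ) else Finset.Icc (0:ℤ) R) := by
      intro b hb
      obtain ⟨x, hx, rfl⟩ := Finset.mem_image.1 hb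
      rw [Fintype.mem_piFinset]
      intro i
      rcases eq_or_ne i j₀ with rfl | hi
      · simp [hg]
      · simp only [hg, hi, if_neg hi]
        refine Finset.mem_Icc.2 ⟨?_, ?_⟩
        · apply Int.floor_nonneg.2
          apply div_nonneg _ (by linarith)
          have := hmem x hx i
          have := abs_le.1 (hmem x hx i)
          linarith [this.1]
        · have h1 : (x i - C i + ρ' * R) / (2 * ρ') ≤ R := by
            rw [div_le_iff₀ (by linarith)]
            have := (abs_le.1 (hmem x hx i)).2
            nlinarith [hρ'.le]
          calc ⌊(x i - C i + ρ' * R) / (2 * ρ')⌋ ≤ ⌊(R:ℝ)⌋ := Int.floor_le_floor h1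
            _ = R := by simp
    calc (P.image g).card ≤ _ := Finset.card_le_card hsub
      _ = ∏ i : Fin N, (if i = j₀ then ({0} : Finset ℤ) else Finset.Icc (0:ℤ) R).card := by
          rw [Fintype.card_piFinset]
      _ = (R + 1) ^ (N - 1) := by
          rw [← Finset.mul_prod_erase _ _ (Finset.mem_univ j₀), if_pos rfl,
            Finset.prod_congr rfl (fun i hi => by rw [if_neg (Finset.mem_erase.1 hi).1]),
            Finset.prod_const, Finset.card_singleton, one_mul, Int.card_Icc,
            Finset.card_erase_of_mem (Finset.mem_univ _), Finset.card_univ, Fintype.card_fin]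
          norm_num
  calc P.card ≤ (3 * N + 1) * (P.image g).card := Finset.card_le_mul_card_image _ _ hfiber
    _ ≤ (3 * N + 1) * (R + 1) ^ (N - 1) := by
        exact Nat.mul_le_mul_left _ himage


/-- Row-reduction: determinant of the homogenised matrix equals that of differences. -/
lemma det_cons_one {n : ℕ} (y : Fin (n + 1) → Fin n → ℝ) :
    (Matrix.of fun i => Fin.cons (1 : ℝ) (y i)).det =
      (Matrix.of fun (i : Fin n) (j : Fin n) => y i.succ j - y 0 j).det := by
  set B : Matrix (Fin (n+1)) (Fin (n+1)) ℝ :=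
    Matrix.of fun i => if i = 0 then Fin.cons (1:ℝ) (y 0)
      else Fin.cons (0:ℝ) (fun j => y i j - y 0 j) with hB
  have h1 : (Matrix.of fun i => Fin.cons (1 : ℝ) (y i)).det = B.det := by
    apply Matrix.det_eq_of_forall_row_eq_smul_add_const
      (fun i => if i = 0 then (0:ℝ) else 1) 0 (if_pos rfl)
    intro i j
    rcases eq_or_ne i 0 with rfl | hi
    · simp [hB]
    · simp only [hB, Matrix.of_apply, if_neg hi, if_pos rfl]
      refine Fin.cases ?_ (fun j' => ?_) j
      · simp
      · simp [Fin.cons_succ]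
  rw [h1]
  rw [Matrix.det_succ_column_zero]
  have h2 : ∀ i : Fin (n+1), i ≠ 0 → ((-1:ℝ)) ^ (i:ℕ) * B i 0 *
      (B.submatrix i.succAbove Fin.succ).det = 0 := by
    intro i hi
    have : B i 0 = 0 := by simp [hB, if_neg hi]
    rw [this]; ring
  rw [Finset.sum_eq_single (0 : Fin (n+1))]
  · have hB0 : B 0 0 = 1 := by simp [hB]
    have hsub : B.submatrix (Fin.succAbove 0) Fin.succ =
        Matrix.of fun (i : Fin n) (j : Fin n) => y i.succ j - y 0 j := by
      ext i j
      simp [hB, Matrix.submatrix_apply, Fin.succAbove_zero, Fin.succ_ne_zero, Fin.cons_succ]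
    rw [hB0, hsub]
    simp
  · intro i _ hi
    exact h2 i hi
  · intro h; exact absurd (Finset.mem_univ _) h



/-- The simplex lemma: rational points with bounded denominators lying in a small box
all lie on a single affine hyperplane. -/
lemma exists_hyperplane {N : ℕ} (hN : 0 < N) (Y : Set (Fin N → ℝ)) {T s : ℝ}
    (hs : 0 ≤ s)
    (hrep : ∀ y ∈ Y, ∃ (q : ℕ) (p : Fin N → ℤ), 0 < q ∧ (q : ℝ) ≤ T ∧
      y = fun i => (p i : ℝ) / q)
    (hsize : ∀ y ∈ Y, ∀ z ∈ Y, ∀ j, |y j - z j| ≤ s)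
    (hsmall : T ^ (N + 1) * ((Nat.factorial N : ℝ) * s ^ N) < 1) :
    ∃ (a : Fin N → ℝ) (t : ℝ), a ≠ 0 ∧ ∀ y ∈ Y, (∑ i, a i * y i) = t := by
  rcases Y.eq_empty_or_nonempty with rfl | hYne
  · refine ⟨Pi.single ⟨0, hN⟩ 1, 0, ?_, by simp⟩
    intro h
    have := congrFun h ⟨0, hN⟩
    simp [Pi.single_eq_same] at this
  set Z : Set (Fin (N + 1) → ℝ) := (fun y => Fin.cons 1 y) '' Y with hZ
  by_cases hspan : Submodule.span ℝ Z = ⊤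
  · -- contradiction via the determinant bound
    exfalso
    obtain ⟨b, hbZ, hbspan, hbli⟩ := exists_linearIndependent ℝ Z
    rw [hspan] at hbspan
    have hbbasis : Module.Basis b ℝ (Fin (N + 1) → ℝ) :=
      Module.Basis.mk hbli (by rw [Subtype.range_coe]; exact hbspan.ge)
    haveI : Fintype b := FiniteDimensional.fintypeBasisIndex hbbasis
    have hcard : Fintype.card b = N + 1 := by
      have h := Module.finrank_eq_card_basis hbbasis
      rw [Module.finrank_fin_fun] at h
      exact h.symm
    set e : Fin (N + 1) ≃ b := (Fintype.equivFinOfCardEq hcard).symm with he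
    set v : Fin (N + 1) → (Fin (N + 1) → ℝ) := fun i => (e i : Fin (N + 1) → ℝ) with hv
    have hvli : LinearIndependent ℝ v := hbli.comp e e.injective
    have hvZ : ∀ i, v i ∈ Z := fun i => hbZ (e i).2
    -- extract the rational points
    have hchoice : ∀ i : Fin (N + 1), ∃ (q : ℕ) (p : Fin N → ℤ), 0 < q ∧ (q : ℝ) ≤ T ∧
        v i = Fin.cons 1 (fun j => (p j : ℝ) / q) ∧ (fun j => (p j : ℝ) / q) ∈ Y := by
      intro i
      obtain ⟨y, hyY, hyv⟩ := hvZ i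
      obtain ⟨q, p, hq, hqT, hy⟩ := hrep y hyY
      exact ⟨q, p, hq, hqT, by rw [← hyv, hy], by rw [← hy]; exact hyY⟩
    choose q p hq hqT hvy hYmem using hchoice
    set y : Fin (N + 1) → Fin N → ℝ := fun i j => (p i j : ℝ) / q i with hy
    -- the determinant is nonzero
    have hM : (Matrix.of fun i => Fin.cons (1 : ℝ) (y i)) = Matrix.of v := by
      ext i j
      rw [Matrix.of_apply, Matrix.of_apply, hvy i]
    have hdet0 : (Matrix.of fun i => Fin.cons (1 : ℝ) (y i)).det ≠ 0 := by
      rw [hM]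
      have hli : LinearIndependent ℝ (fun i => (Matrix.of v) i) := hvli
      have hunit := Matrix.linearIndependent_rows_iff_isUnit.mp hli
      exact ((Matrix.isUnit_iff_isUnit_det _).mp hunit).ne_zero
    -- scale rows to integers
    set Mq : Matrix (Fin (N + 1)) (Fin (N + 1)) ℤ :=
      Matrix.of fun i => Fin.cons (q i : ℤ) (p i) with hMq
    have hmap : Mq.map (Int.cast : ℤ → ℝ) =
        Matrix.of fun i j => ((q i : ℝ)) * (Matrix.of fun i => Fin.cons (1 : ℝ) (y i)) i j := by
      ext i j
      refine Fin.cases ?_ (fun j' => ?_) j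
      · simp [hMq, Fin.cons_zero]
      · have hqne : ((q i : ℝ)) ≠ 0 := by exact_mod_cast (hq i).ne'
        simp only [Matrix.map_apply, hMq, Matrix.of_apply, Fin.cons_succ, hy]
        field_simp
    -- |det Mq| ≥ 1 since it is a nonzero integer
    have hdetMq : ((Mq.det : ℤ) : ℝ) =
        (∏ i, (q i : ℝ)) * (Matrix.of fun i => Fin.cons (1 : ℝ) (y i)).det := by
      have h1 : ((Mq.det : ℤ) : ℝ) = (Mq.map (Int.cast : ℤ → ℝ)).det := by
        have := RingHom.map_det (Int.castRingHom ℝ) Mq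
        simpa [RingHom.mapMatrix_apply] using this
      rw [h1, hmap]
      -- row scaling
      rw [← Matrix.det_transpose]
      have : (Matrix.of fun i j => (q i : ℝ) *
          (Matrix.of fun i => Fin.cons (1:ℝ) (y i)) i j).transpose =
          Matrix.of fun i j => (q j : ℝ) *
            (Matrix.of fun i => Fin.cons (1:ℝ) (y i)).transpose i j := by
        ext i j; simp [Matrix.transpose_apply]
      rw [this, Matrix.det_mul_row, Matrix.det_transpose]
    have hMqne : Mq.det ≠ 0 := by
      intro h
      rw [h] at hdetMq
      have hqprod : (∏ i, (q i : ℝ)) ≠ 0 := by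
        apply Finset.prod_ne_zero_iff.2
        intro i _
        exact_mod_cast (hq i).ne'
      simp only [Int.cast_zero] at hdetMq
      exact hdet0 (by
        rcases mul_eq_zero.mp hdetMq.symm with h | h
        · exact absurd h hqprod
        · exact h)
    have h1le : (1 : ℝ) ≤ |((Mq.det : ℤ) : ℝ)| := by
      rw [← Int.cast_abs]
      exact_mod_cast Int.one_le_abs hMqne
    -- bound the determinant
    have hTnonneg : 0 ≤ T := le_trans (by exact_mod_cast (hq 0).le : (0:ℝ) ≤ (q 0 : ℝ)) (hqT 0)
    have hdet_le : |(Matrix.of fun i => Fin.cons (1 : ℝ) (y i)).det| ≤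
        (Nat.factorial N : ℝ) * s ^ N := by
      rw [det_cons_one]
      have := Matrix.det_le (A := Matrix.of fun (i : Fin N) (j : Fin N) => y i.succ j - y 0 j)
        (abv := AbsoluteValue.abs) (x := s) ?_
      · simpa [Fintype.card_fin, nsmul_eq_mul] using this
      · intro i j
        simpa using hsize _ (hYmem i.succ) _ (hYmem 0) j
    have hprod_le : (∏ i, (q i : ℝ)) ≤ T ^ (N + 1) := by
      calc (∏ i, (q i : ℝ)) ≤ ∏ _i : Fin (N + 1), T :=
            Finset.prod_le_prod (fun i _ => by exact_mod_cast (hq i).le) (fun i _ => hqT i)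
        _ = T ^ (N + 1) := by rw [Finset.prod_const, Finset.card_univ, Fintype.card_fin]
    have : (1 : ℝ) ≤ T ^ (N + 1) * ((Nat.factorial N : ℝ) * s ^ N) := by
      calc (1:ℝ) ≤ |((Mq.det : ℤ) : ℝ)| := h1le
        _ = |∏ i, (q i : ℝ)| * |(Matrix.of fun i => Fin.cons (1 : ℝ) (y i)).det| := by
            rw [hdetMq, abs_mul]
        _ ≤ T ^ (N + 1) * ((Nat.factorial N : ℝ) * s ^ N) := by
            apply mul_le_mul _ hdet_le (abs_nonneg _) (by positivity)
            rw [abs_of_nonneg (Finset.prod_nonneg (fun i _ => by positivity))]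
            exact hprod_le
    linarith
  · -- there is a nonzero functional vanishing on the span
    have hlt : Submodule.span ℝ Z < ⊤ := lt_top_iff_ne_top.2 hspan
    obtain ⟨φ, hφne, hφbot⟩ := Submodule.exists_dual_map_eq_bot_of_lt_top hlt inferInstance
    have hφZ : ∀ z ∈ Z, φ z = 0 := by
      intro z hz
      have : φ z ∈ (Submodule.span ℝ Z).map φ := ⟨z, Submodule.subset_span hz, rfl⟩
      rw [hφbot] at this
      simpa using this
    set a : Fin N → ℝ := fun i => φ (fun j => if i.succ = j then 1 else 0) with ha
    set c₀ : ℝ := φ (fun j => if (0 : Fin (N+1)) = j then 1 else 0) with hc₀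
    have hφeval : ∀ y' : Fin N → ℝ, φ (Fin.cons 1 y') = c₀ + ∑ i, y' i * a i := by
      intro y'
      rw [LinearMap.pi_apply_eq_sum_univ φ (Fin.cons 1 y'), Fin.sum_univ_succ]
      simp only [Fin.cons_zero, Fin.cons_succ, one_smul, smul_eq_mul, ha, hc₀]
      rw [one_mul]
    have hkey : ∀ y' ∈ Y, c₀ + ∑ i, y' i * a i = 0 := by
      intro y' hy'
      rw [← hφeval]
      exact hφZ _ ⟨y', hy', rfl⟩
    have hane : a ≠ 0 := by
      intro ha0
      obtain ⟨y₀, hy₀⟩ := hYne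
      have hc00 : c₀ = 0 := by
        have := hkey y₀ hy₀
        rw [ha0] at this
        simpa using this
      apply hφne
      apply LinearMap.ext
      intro x
      rw [LinearMap.pi_apply_eq_sum_univ φ x]
      have hzero : ∀ j : Fin (N+1), φ (fun j' => if j = j' then 1 else 0) = 0 := by
        intro j
        refine Fin.cases ?_ (fun j' => ?_) j
        · exact hc00
        · have := congrFun ha0 j'
          simpa [ha] using this
      simp only [hzero, smul_zero, Finset.sum_const_zero]
      rfl
    refine ⟨a, -c₀, hane, ?_⟩
    intro y' hy'
    have := hkey y' hy'
    have h2 : ∑ i, y' i * a i = ∑ i, a i * y' i := by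
      congr 1; ext i; ring
    rw [← h2]
    linarith


namespace SplittingStructure
variable {X : Type*} [MetricSpace X]

lemma one_mem (σ : SplittingStructure X) : 1 ∈ σ.U := by
  obtain ⟨u, hu⟩ := σ.U_infinite.nonempty
  have := σ.div_mem u hu u hu dvd_rfl
  rwa [Nat.div_self (σ.U_pos u hu)] at this

lemma pow_mem (σ : SplittingStructure X) {u : ℕ} (hu : u ∈ σ.U) (n : ℕ) :
    u ^ (n + 1) ∈ σ.U := by
  induction n with
  | zero => simpa using hu
  | succ n ih => rw [pow_succ]; exact σ.mul_mem _ ih _ hu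

lemma f_pow (σ : SplittingStructure X) {u : ℕ} (hu : u ∈ σ.U) (n : ℕ) :
    σ.f (u ^ (n + 1)) = (σ.f u) ^ (n + 1) := by
  induction n with
  | zero => simp
  | succ n ih => rw [pow_succ, σ.f_mul _ (σ.pow_mem hu n) _ hu, ih]; ring

lemma Ainfty_subset_Au (σ : SplittingStructure X) (B : SSBall X) {u : ℕ} (hu : u ∈ σ.U) :
    σ.Ainfty B ⊆ σ.Au B u := by
  intro x hx
  exact Set.mem_iInter₂.1 hx u hu

lemma f_one_le (σ : SplittingStructure X) {u : ℕ} (hu : u ∈ σ.U) : 1 ≤ σ.f u :=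
  σ.f_pos u hu

/-- The key growth estimate coming from the dimension hypothesis:
`f u ≥ u ^ d` for every `u ∈ U`, `u ≥ 2`. -/
lemma rpow_le_f (σ : SplittingStructure X) (B : SSBall X) {d : ℝ}
    (hd : ENNReal.ofReal d ≤ dimH (σ.Ainfty B)) {R : ℕ} (hRU : R ∈ σ.U) (hR2 : 2 ≤ R) :
    (R : ℝ) ^ d ≤ (σ.f R : ℝ) := by
  borelize X
  have hR1 : (1 : ℝ) < R := by exact_mod_cast hR2
  have hR0 : (0 : ℝ) < R := by linarith
  have hf1 : (1 : ℝ) ≤ σ.f R := by exact_mod_cast σ.f_one_le hRU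
  have hf0 : (0 : ℝ) < σ.f R := by linarith
  rcases le_or_gt d 0 with hd0 | hd0
  · calc (R : ℝ) ^ d ≤ (R : ℝ) ^ (0 : ℝ) :=
        Real.rpow_le_rpow_of_exponent_le hR1.le hd0
      _ = 1 := Real.rpow_zero _
      _ ≤ _ := hf1
  set s := Real.logb R (σ.f R) with hsdef
  have hs0 : 0 ≤ s := Real.logb_nonneg hR1 hf1
  have hRs : (R : ℝ) ^ s = σ.f R := Real.rpow_logb hR0 (by linarith) hf0
  -- it suffices to show d ≤ s
  suffices hds : d ≤ s by
    calc (R : ℝ) ^ d ≤ (R : ℝ) ^ s := Real.rpow_le_rpow_of_exponent_le hR1.le hds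
      _ = σ.f R := hRs
  by_contra hcon
  push_neg at hcon  -- s < d
  set t := (s + d) / 2 with htdef
  have hst : s < t := by rw [htdef]; linarith
  have htd : t < d := by rw [htdef]; linarith
  have ht0 : 0 < t := lt_of_le_of_lt hs0 hst
  -- the covering at scale R^{n+1}
  have hcover : ∀ n : ℕ, σ.Ainfty B ⊆ ⋃ b : {b // b ∈ σ.S B (R ^ (n + 1))}, (b : SSBall X).toSet := by
    intro n
    refine (σ.Ainfty_subset_Au B (σ.pow_mem hRU n)).trans ?_
    intro x hx
    rw [SplittingStructure.Au] at hx
    simp only [Set.mem_iUnion] at hx ⊢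
    obtain ⟨b, hb, hxb⟩ := hx
    exact ⟨⟨b, hb⟩, hxb⟩
  have hrad : ∀ n : ℕ, ∀ b ∈ σ.S B (R ^ (n + 1)), (b : SSBall X).radius =
      B.radius * ((R:ℝ)⁻¹) ^ (n + 1) := by
    intro n b hb
    rw [σ.S_radius B _ (σ.pow_mem hRU n) b hb]
    rw [div_eq_mul_inv, inv_pow]
    push_cast
    ring_nf
  -- diameters
  have hdiam : ∀ n : ℕ, ∀ b ∈ σ.S B (R ^ (n + 1)),
      EMetric.diam (b : SSBall X).toSet ≤
        ENNReal.ofReal (2 * B.radius * ((R:ℝ)⁻¹) ^ (n + 1)) := by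
    intro n b hb
    apply EMetric.diam_le
    intro x hx y hy
    rw [edist_dist]
    apply ENNReal.ofReal_le_ofReal
    have hx' := Metric.mem_closedBall.1 hx
    have hy' := Metric.mem_closedBall.1 hy
    calc dist x y ≤ dist x b.center + dist b.center y := dist_triangle _ _ _
      _ ≤ b.radius + b.radius := by
          rw [dist_comm b.center y] at *
          exact add_le_add hx' hy'
      _ = 2 * B.radius * ((R:ℝ)⁻¹) ^ (n + 1) := by rw [hrad n b hb]; ring
  -- cardinality of the covering
  have hcard : ∀ n : ℕ, (σ.S B (R ^ (n + 1))).card = (σ.f R) ^ (n + 1) := by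
    intro n
    rw [σ.S_card B _ (σ.pow_mem hRU n), σ.f_pow hRU n]
  have hρ0 : 0 < B.radius := B.radius_pos
  -- the real bounding sequence
  set gr : ℕ → ℝ := fun n =>
    ((2 * B.radius) ^ t) * ((σ.f R : ℝ) * ((R:ℝ)⁻¹) ^ t) ^ (n + 1) with hgr
  have hbase : 0 ≤ (σ.f R : ℝ) * ((R:ℝ)⁻¹) ^ t := by positivity
  have hbaselt : (σ.f R : ℝ) * ((R:ℝ)⁻¹) ^ t < 1 := by
    rw [Real.inv_rpow hR0.le, ← div_eq_mul_inv, div_lt_one (Real.rpow_pos_of_pos hR0 t), ← hRs]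
    exact (Real.rpow_lt_rpow_left_iff hR1).2 hst
  have hgrlim : Tendsto gr atTop (nhds 0) := by
    rw [show (0:ℝ) = ((2 * B.radius) ^ t) * 0 by ring]
    apply Filter.Tendsto.const_mul
    have := tendsto_pow_atTop_nhds_zero_of_lt_one hbase hbaselt
    exact this.comp (tendsto_add_atTop_nat 1)
  -- Hausdorff measure estimate
  have hμ : (MeasureTheory.Measure.hausdorffMeasure t : MeasureTheory.Measure X) (σ.Ainfty B) = 0 := by
    have hle := MeasureTheory.Measure.hausdorffMeasure_le_liminf_sum (l := atTop) t (σ.Ainfty B)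
      (fun n : ℕ => ENNReal.ofReal (2 * B.radius * ((R:ℝ)⁻¹) ^ (n + 1)))
      ?_ (fun n (b : {b // b ∈ σ.S B (R ^ (n + 1))}) => (b : SSBall X).toSet) ?_ ?_
    · refine le_antisymm (le_trans hle ?_) (by simp)
      have hterm : ∀ n : ℕ, (∑ b : {b // b ∈ σ.S B (R ^ (n + 1))},
          EMetric.diam (b : SSBall X).toSet ^ t) ≤ ENNReal.ofReal (gr n) := by
        intro n
        calc (∑ b : {b // b ∈ σ.S B (R ^ (n + 1))}, EMetric.diam (b : SSBall X).toSet ^ t)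
            ≤ ∑ _b : {b // b ∈ σ.S B (R ^ (n + 1))},
              ENNReal.ofReal ((2 * B.radius * ((R:ℝ)⁻¹) ^ (n + 1)) ^ t) := by
              apply Finset.sum_le_sum
              intro b _
              rw [← ENNReal.ofReal_rpow_of_nonneg (by positivity) ht0.le]
              exact ENNReal.rpow_le_rpow (hdiam n b b.2) ht0.le
          _ = (Fintype.card {b // b ∈ σ.S B (R ^ (n + 1))}) •
              ENNReal.ofReal ((2 * B.radius * ((R:ℝ)⁻¹) ^ (n + 1)) ^ t) := by
              rw [Finset.sum_const, Finset.card_univ]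
          _ ≤ ENNReal.ofReal (gr n) := by
              rw [Fintype.card_coe, hcard n, nsmul_eq_mul]
              rw [← ENNReal.ofReal_natCast ((σ.f R) ^ (n+1)), ← ENNReal.ofReal_mul (by positivity)]
              apply ENNReal.ofReal_le_ofReal
              rw [hgr]
              have hexp : (2 * B.radius * ((R:ℝ)⁻¹) ^ (n + 1)) ^ t =
                  (2 * B.radius) ^ t * (((R:ℝ)⁻¹) ^ t) ^ (n+1) := by
                rw [Real.mul_rpow (by positivity) (by positivity), ← Real.rpow_natCast ((R:ℝ)⁻¹) (n+1),
                  ← Real.rpow_mul (by positivity), mul_comm ((n+1 : ℕ) : ℝ) t,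
                  Real.rpow_mul (by positivity), Real.rpow_natCast]
              rw [hexp]
              push_cast
              rw [mul_pow]
              ring_nf
              exact le_refl _
      calc Filter.liminf (fun n => ∑ b : {b // b ∈ σ.S B (R ^ (n + 1))},
              EMetric.diam (b : SSBall X).toSet ^ t) atTop
          ≤ Filter.liminf (fun n => ENNReal.ofReal (gr n)) atTop := by
            apply Filter.liminf_le_liminf (Filter.Eventually.of_forall hterm) <;>
              isBoundedDefault
        _ = 0 := by
            have : Tendsto (fun n => ENNReal.ofReal (gr n)) atTop (nhds 0) := by
              rw [show (0 : ENNReal) = ENNReal.ofReal 0 by simp]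
              exact (ENNReal.continuous_ofReal.tendsto 0).comp hgrlim
            exact this.liminf_eq
    · -- radii tend to zero
      rw [show (0 : ENNReal) = ENNReal.ofReal 0 by simp]
      apply (ENNReal.continuous_ofReal.tendsto 0).comp
      rw [show (0:ℝ) = 2 * B.radius * 0 by ring]
      apply Filter.Tendsto.const_mul
      exact (tendsto_pow_atTop_nhds_zero_of_lt_one (by positivity)
        (by rw [inv_lt_one_iff₀]; right; exact hR1)).comp (tendsto_add_atTop_nat 1)
    · exact Filter.Eventually.of_forall fun n => fun b => hdiam n b b.2
    · exact Filter.Eventually.of_forall hcover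
  -- conclude
  have hdim : dimH (σ.Ainfty B) ≤ ENNReal.ofReal t := by
    have : dimH (σ.Ainfty B) ≤ (t.toNNReal : ENNReal) := by
      apply dimH_le_of_hausdorffMeasure_ne_top
      rw [show ((t.toNNReal : NNReal) : ℝ) = t from Real.coe_toNNReal t ht0.le]
      rw [hμ]
      exact ENNReal.zero_ne_top
    rwa [ENNReal.ofReal]
  have : ENNReal.ofReal d ≤ ENNReal.ofReal t := le_trans hd hdim
  rw [ENNReal.ofReal_le_ofReal_iff ht0.le] at this
  linarith

end SplittingStructure

/-- Radius of a generation-`n` ball. -/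
noncomputable def rad (R n : ℕ) : ℝ := (1 / 2) * ((R : ℝ) ^ n)⁻¹

/-- The end of the `j`-th window of denominators. -/
noncomputable def Twin (N R j : ℕ) : ℝ := (R : ℝ) ^ ((j : ℝ) * N / (N + 1))

/-- The dangerous-ball predicate at stage `n`. -/
def dang (N R n : ℕ) (b : SSBall (Fin N → ℝ)) : Prop :=
  ∃ q : ℕ, ∃ p : Fin N → ℤ, Twin N R (n - 2) ≤ (q : ℝ) ∧ (q : ℝ) < Twin N R (n - 1) ∧
    (Metric.closedBall (fun i => (p i : ℝ) / q) (rad R 3 * (q : ℝ) ^ (-((N : ℝ) + 1) / N)) ∩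
      b.toSet).Nonempty

lemma rad_pos {R : ℕ} (hR : 0 < R) (n : ℕ) : 0 < rad R n := by
  have : (0:ℝ) < R := by exact_mod_cast hR
  rw [rad]; positivity

lemma rad_succ_mul {R : ℕ} (hR : 0 < R) (n : ℕ) : rad R (n + 1) * R = rad R n := by
  have h : (R:ℝ) ≠ 0 := by exact_mod_cast hR.ne'
  rw [rad, rad, pow_succ]
  field_simp

lemma one_le_Twin {N R : ℕ} (hR : 1 ≤ R) (j : ℕ) : 1 ≤ Twin N R j := by
  rw [Twin]
  apply Real.one_le_rpow (by exact_mod_cast hR) (by positivity)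

lemma Twin_rpow {N R j : ℕ} (hN : 0 < N) (hR : 0 < R) :
    Twin N R j ^ (((N : ℝ) + 1) / N) = (R : ℝ) ^ (j : ℕ) := by
  have hR0 : (0:ℝ) ≤ R := by positivity
  have hN0 : (N:ℝ) ≠ 0 := by positivity
  have hN1 : (N:ℝ) + 1 ≠ 0 := by positivity
  rw [Twin, ← Real.rpow_mul hR0, show ((j:ℝ) * N / (N + 1)) * (((N:ℝ) + 1) / N) = (j:ℝ) by
    field_simp, Real.rpow_natCast]

/-- Key radius bound for dangerous neighbourhoods in the window of stage `n`. -/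
lemma dang_rad_le {N R n : ℕ} (hN : 0 < N) (hR : 0 < R) (hn : 2 ≤ n) (q : ℕ)
    (hq : Twin N R (n - 2) ≤ (q : ℝ)) :
    rad R 3 * (q : ℝ) ^ (-((N : ℝ) + 1) / N) ≤ rad R (n + 1) := by
  have hR0 : (0:ℝ) < R := by exact_mod_cast hR
  have hq1 : (1:ℝ) ≤ q := le_trans (one_le_Twin (by omega) _) hq
  have hq0 : (0:ℝ) < q := by linarith
  have h1 : (q:ℝ) ^ (-((N : ℝ) + 1) / N) = ((q:ℝ) ^ (((N : ℝ) + 1) / N))⁻¹ := by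
    rw [neg_div, Real.rpow_neg hq0.le]
  have h2 : (R:ℝ) ^ (n - 2 : ℕ) ≤ (q:ℝ) ^ (((N : ℝ) + 1) / N) := by
    rw [← Twin_rpow (j := n - 2) hN hR]
    exact Real.rpow_le_rpow (le_trans zero_le_one (one_le_Twin (by omega) _)) hq (by positivity)
  have h3 : ((q:ℝ) ^ (((N : ℝ) + 1) / N))⁻¹ ≤ ((R:ℝ) ^ (n - 2 : ℕ))⁻¹ := by
    apply inv_anti₀ (by positivity) h2
  calc rad R 3 * (q:ℝ) ^ (-((N : ℝ) + 1) / N) ≤ rad R 3 * ((R:ℝ) ^ (n - 2 : ℕ))⁻¹ := by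
        rw [h1]
        exact mul_le_mul_of_nonneg_left h3 (rad_pos hR 3).le
    _ = rad R (n + 1) := by
        rw [rad, rad, mul_assoc, ← mul_inv, ← pow_add,
          show 3 + (n - 2) = n + 1 by omega]

/-- The central counting estimate: dangerous balls of `S(B'',R)` are few. -/
lemma dang_count {N : ℕ} (hN : 0 < N) (σ : SplittingStructure (Fin N → ℝ))
    {R : ℕ} (hRU : R ∈ σ.U) (hRfact : 2 * ((N.factorial : ℝ) + 1) < R)
    (n : ℕ) (B'' : SSBall (Fin N → ℝ)) (hrad : B''.radius = rad R n) :
    ((σ.S B'' R).filter (dang N R n)).card ≤ (3 * N + 1) * (R + 1) ^ (N - 1) := by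
  have hfact1 : (1:ℝ) ≤ N.factorial := by exact_mod_cast N.factorial_pos
  have hR2 : (2:ℝ) ≤ R := by linarith
  have hR : 0 < R := by exact_mod_cast (by linarith : (0:ℝ) < R)
  have hR0 : (0:ℝ) < R := by exact_mod_cast hR
  rcases lt_or_ge n 2 with hn | hn
  · -- the window is empty
    convert Nat.zero_le _
    rw [Finset.card_eq_zero, Finset.filter_eq_empty_iff]
    intro b _
    rintro ⟨q, p, hq1, hq2, -⟩
    have : n - 2 = n - 1 := by omega
    rw [this] at hq1
    linarith
  · -- main case
    set C := B''.center with hC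
    set Y : Set (Fin N → ℝ) := {y | ∃ q : ℕ, ∃ p : Fin N → ℤ,
      Twin N R (n - 2) ≤ (q : ℝ) ∧ (q : ℝ) < Twin N R (n - 1) ∧
      (Metric.closedBall (fun i => (p i : ℝ) / q) (rad R 3 * (q : ℝ) ^ (-((N : ℝ) + 1) / N)) ∩
        B''.toSet).Nonempty ∧ y = fun i => (p i : ℝ) / q} with hY
    -- each point of Y is near the centre
    have hYnear : ∀ y ∈ Y, ∀ j, |y j - C j| ≤ 2 * rad R n := by
      rintro y ⟨q, p, hq1, hq2, ⟨z, hzΔ, hzB⟩, rfl⟩ j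
      have h1 : |(p j : ℝ) / q - z j| ≤ rad R (n + 1) := by
        have hco := dist_le_pi_dist z (fun i => (p i : ℝ) / q) j
        have hz := Metric.mem_closedBall.1 hzΔ
        have h2 := le_trans hco hz
        rw [Real.dist_eq] at h2
        calc |(p j : ℝ) / q - z j| = |z j - (p j : ℝ)/q| := abs_sub_comm _ _
          _ ≤ rad R 3 * (q : ℝ) ^ (-((N : ℝ) + 1) / N) := h2
          _ ≤ rad R (n + 1) := dang_rad_le hN hR hn q hq1
      have h2 : |z j - C j| ≤ rad R n := by
        have := dist_le_pi_dist z C j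
        have hz := Metric.mem_closedBall.1 hzB
        rw [← hrad]
        calc |z j - C j| = dist (z j) (C j) := (Real.dist_eq _ _).symm
          _ ≤ dist z C := dist_le_pi_dist z C j
          _ ≤ B''.radius := hz
      have h3 : rad R (n+1) ≤ rad R n := by
        rw [← rad_succ_mul hR n]
        nlinarith [rad_pos hR (n+1), hR2]
      calc |(fun i => (p i : ℝ) / q) j - C j| ≤ |(p j : ℝ) / q - z j| + |z j - C j| := by
            have := abs_sub_le ((p j : ℝ)/q) (z j) (C j)
            simpa using this
        _ ≤ 2 * rad R n := by linarith
    -- the hyperplane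
    have hrepY : ∀ y ∈ Y, ∃ (q : ℕ) (p : Fin N → ℤ), 0 < q ∧ (q : ℝ) ≤ Twin N R (n-1) ∧
        y = fun i => (p i : ℝ) / q := by
      rintro y ⟨q, p, hq1, hq2, hne, rfl⟩
      refine ⟨q, p, ?_, hq2.le, rfl⟩
      have h1 := one_le_Twin (N := N) (R := R) (by omega) (n-2)
      have h2 : (1:ℝ) ≤ q := le_trans h1 hq1
      exact_mod_cast (by linarith : (0:ℝ) < (q:ℝ))
    have hsizeY : ∀ y ∈ Y, ∀ z ∈ Y, ∀ j, |y j - z j| ≤ 4 * rad R n := by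
      intro y hy z hz j
      calc |y j - z j| ≤ |y j - C j| + |C j - z j| := by
            have := abs_sub_le (y j) (C j) (z j); simpa using this
        _ ≤ 2 * rad R n + 2 * rad R n := by
            have h1 := hYnear y hy j
            have h2 := hYnear z hz j
            rw [abs_sub_comm] at h2
            linarith
        _ = 4 * rad R n := by ring
    have hsmallY : Twin N R (n-1) ^ (N + 1) * ((N.factorial : ℝ) * (4 * rad R n) ^ N) < 1 := by
      have hTv : Twin N R (n-1) ^ (N + 1) = (R:ℝ) ^ ((n-1 : ℕ) * N) := by
        rw [Twin, ← Real.rpow_natCast _ (N + 1), ← Real.rpow_mul hR0.le,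
          show (((n-1:ℕ):ℝ) * N / (N + 1)) * (((N + 1 : ℕ)):ℝ) = (((n-1:ℕ) * N : ℕ):ℝ) by
            push_cast
            have hne : ((N:ℝ) + 1) ≠ 0 := by positivity
            field_simp,
          Real.rpow_natCast]
      have hs : (4 * rad R n) ^ N = 2 ^ N * ((R:ℝ) ^ (n * N))⁻¹ := by
        rw [rad]
        rw [show (4:ℝ) * ((1/2) * ((R:ℝ) ^ n)⁻¹) = 2 * ((R:ℝ) ^ n)⁻¹ by ring]
        rw [mul_pow, inv_pow, pow_mul]
      rw [hTv, hs]
      have hcalc : (R:ℝ) ^ ((n-1:ℕ) * N) * ((N.factorial : ℝ) * (2 ^ N * ((R:ℝ) ^ (n * N))⁻¹))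
          = (N.factorial : ℝ) * 2 ^ N * ((R:ℝ) ^ N)⁻¹ := by
        have : n * N = (n-1:ℕ) * N + N := by
          have : n - 1 + 1 = n := by omega
          nlinarith [this]
        rw [this, pow_add, mul_inv]
        have hpow : ((R:ℝ) ^ ((n-1:ℕ) * N)) ≠ 0 := by positivity
        field_simp
      rw [hcalc]
      -- now N! 2^N < R^N
      have hfin : (N.factorial : ℝ) * 2 ^ N < (R:ℝ) ^ N := by
        have h1 : (2:ℝ) * ((N.factorial : ℝ) + 1) ≤ R := hRfact.le
        have h2 : ((2:ℝ) * ((N.factorial : ℝ) + 1)) ^ N ≤ (R:ℝ) ^ N :=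
          pow_le_pow_left₀ (by positivity) h1 N
        have h3 : (2:ℝ) ^ N * ((N.factorial : ℝ) + 1) ≤ ((2:ℝ) * ((N.factorial : ℝ) + 1)) ^ N := by
          rw [mul_pow]
          apply mul_le_mul_of_nonneg_left _ (by positivity)
          exact le_self_pow₀ (by linarith) (by omega)
        nlinarith [pow_pos (show (0:ℝ) < 2 by norm_num) N]
      rw [← div_eq_mul_inv, div_lt_one (by positivity)]
      exact hfin
    obtain ⟨a, t, ha0, hplane⟩ := exists_hyperplane hN Y (T := Twin N R (n-1))
      (s := 4 * rad R n) (by linarith [rad_pos hR n]) hrepY hsizeY hsmallY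
    -- normalise the functional
    set A := ∑ i, |a i| with hA
    have hA0 : 0 < A := by
      obtain ⟨i, hi⟩ := Function.ne_iff.1 ha0
      have h1 : |a i| ≤ A := Finset.single_le_sum (f := fun i => |a i|)
        (fun j _ => abs_nonneg _) (Finset.mem_univ i)
      have h2 : 0 < |a i| := abs_pos.2 hi
      linarith
    set a' := fun i => a i / A with ha'
    have ha'1 : ∑ i, |a' i| = 1 := by
      simp only [ha', abs_div, abs_of_pos hA0]
      rw [← Finset.sum_div, ← hA, div_self hA0.ne']
    have hplane' : ∀ y ∈ Y, (∑ i, a' i * y i) = t / A := by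
      intro y hy
      simp only [ha']
      rw [show (∑ i, a i / A * y i) = (∑ i, a i * y i) / A by
        rw [Finset.sum_div]; congr 1; ext i; ring]
      rw [hplane y hy]
    -- the set of centres
    set P := ((σ.S B'' R).filter (dang N R n)).image SSBall.center with hP
    have hsepB : ∀ b₁ ∈ σ.S B'' R, ∀ b₂ ∈ σ.S B'' R, b₁ ≠ b₂ →
        2 * rad R (n+1) ≤ dist b₁.center b₂.center := by
      intro b₁ h₁ b₂ h₂ hne
      have hsep := σ.S_sep B'' R hRU b₁ h₁ b₂ h₂ hne
      rw [hrad] at hsep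
      calc 2 * rad R (n+1) = 2 * rad R n / R := by
            rw [← rad_succ_mul hR n]; field_simp
        _ ≤ dist b₁.center b₂.center := hsep
    have hinj : Set.InjOn SSBall.center (((σ.S B'' R).filter (dang N R n) : Finset (SSBall (Fin N → ℝ))) : Set (SSBall (Fin N → ℝ))) := by
      intro b₁ h₁ b₂ h₂ h
      by_contra hne
      have h2 := hsepB b₁ (Finset.mem_filter.1 h₁).1 b₂ (Finset.mem_filter.1 h₂).1 hne
      rw [show b₁.center = b₂.center from h, dist_self] at h2
      nlinarith [rad_pos hR (n+1)]
    have hcardP : ((σ.S B'' R).filter (dang N R n)).card = P.card :=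
      (Finset.card_image_of_injOn hinj).symm
    rw [hcardP]
    -- centres lie in B''
    have hcent : ∀ b ∈ σ.S B'' R, b.center ∈ B''.toSet := by
      intro b hb
      apply σ.S_subset B'' R hRU b hb
      rw [SSBall.toSet, Metric.mem_closedBall, dist_self]
      exact b.radius_pos.le
    have hsub : ∀ b ∈ σ.S B'' R, b.toSet ⊆ B''.toSet := fun b hb => σ.S_subset B'' R hRU b hb
    have hradb : ∀ b ∈ σ.S B'' R, b.radius = rad R (n+1) := by
      intro b hb
      rw [σ.S_radius B'' R hRU b hb, hrad, ← rad_succ_mul hR n]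
      field_simp
    apply slab_count hN (t := t / A) (w := rad R (n+1)) ha'1
      (rad_pos hR (n+1)).le (rad_pos hR (n+1)) le_rfl (C := C)
    · -- hmem
      intro x hx i
      obtain ⟨b, hb, rfl⟩ := Finset.mem_image.1 hx
      have hbS := (Finset.mem_filter.1 hb).1
      have h1 : dist b.center C ≤ rad R n := by
        rw [← hrad]
        exact Metric.mem_closedBall.1 (hcent b hbS)
      rw [rad_succ_mul hR n]
      calc |b.center i - C i| = dist (b.center i) (C i) := Real.dist_eq _ _
        _ ≤ dist b.center C := dist_le_pi_dist _ _ _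
        _ ≤ rad R n := h1
    · -- hsep
      intro x hx y hy hne
      obtain ⟨b₁, hb₁, rfl⟩ := Finset.mem_image.1 hx
      obtain ⟨b₂, hb₂, rfl⟩ := Finset.mem_image.1 hy
      exact hsepB b₁ (Finset.mem_filter.1 hb₁).1 b₂ (Finset.mem_filter.1 hb₂).1
        (fun h => hne (by rw [h]))
    · -- hslab
      intro x hx
      obtain ⟨b, hb, rfl⟩ := Finset.mem_image.1 hx
      obtain ⟨hbS, q, p, hq1, hq2, ⟨z, hzΔ, hzb⟩⟩ := Finset.mem_filter.1 hb
      set y : Fin N → ℝ := fun i => (p i : ℝ) / q with hy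
      have hyY : y ∈ Y := ⟨q, p, hq1, hq2, ⟨z, hzΔ, hsub b hbS hzb⟩, rfl⟩
      have hbound : ∀ i, |b.center i - y i| ≤ 2 * rad R (n+1) := by
        intro i
        have h1 : |b.center i - z i| ≤ rad R (n+1) := by
          have hzb' := Metric.mem_closedBall.1 hzb
          rw [← hradb b hbS]
          calc |b.center i - z i| = dist (z i) (b.center i) := by
                rw [Real.dist_eq, abs_sub_comm]
            _ ≤ dist z b.center := dist_le_pi_dist _ _ _
            _ ≤ b.radius := hzb'
        have h2 : |z i - y i| ≤ rad R (n+1) := by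
          have hzΔ' := Metric.mem_closedBall.1 hzΔ
          calc |z i - y i| = dist (z i) (y i) := Real.dist_eq _ _
            _ ≤ dist z y := dist_le_pi_dist _ _ _
            _ ≤ rad R 3 * (q:ℝ) ^ (-((N : ℝ) + 1) / N) := hzΔ'
            _ ≤ rad R (n+1) := dang_rad_le hN hR hn q hq1
        calc |b.center i - y i| ≤ |b.center i - z i| + |z i - y i| := by
              have := abs_sub_le (b.center i) (z i) (y i); simpa using this
          _ ≤ 2 * rad R (n+1) := by linarith
      rw [show t / A = ∑ i, a' i * y i from (hplane' y hyY).symm, ← Finset.sum_sub_distrib]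
      calc |∑ i, (a' i * b.center i - a' i * y i)|
          ≤ ∑ i, |a' i * b.center i - a' i * y i| := Finset.abs_sum_le_sum_abs _ _
        _ ≤ ∑ i, |a' i| * (2 * rad R (n+1)) := by
            apply Finset.sum_le_sum
            intro i _
            rw [show a' i * b.center i - a' i * y i = a' i * (b.center i - y i) by ring, abs_mul]
            exact mul_le_mul_of_nonneg_left (hbound i) (abs_nonneg _)
        _ = 2 * rad R (n+1) := by rw [← Finset.sum_mul, ha'1, one_mul]
        _ = rad R (n+1) + rad R (n+1) := by ring

/-- The Cantor construction. -/
noncomputable def BB (N : ℕ) (σ : SplittingStructure (Fin N → ℝ)) (R : ℕ) :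
    ℕ → Finset (SSBall (Fin N → ℝ))
  | 0 => {unitBox N}
  | (n + 1) => ((BB N σ R n).biUnion fun B' => σ.S B' R).filter fun b => ¬ dang N R n b

lemma BB_zero (N : ℕ) (σ : SplittingStructure (Fin N → ℝ)) (R : ℕ) :
    BB N σ R 0 = {unitBox N} := rfl

lemma BB_succ (N : ℕ) (σ : SplittingStructure (Fin N → ℝ)) (R : ℕ) (n : ℕ) :
    BB N σ R (n + 1) =
      ((BB N σ R n).biUnion fun B' => σ.S B' R).filter fun b => ¬ dang N R n b := rfl

lemma BB_inv {N : ℕ} (σ : SplittingStructure (Fin N → ℝ)) {R : ℕ}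
    (hRU : R ∈ σ.U) (hR : 0 < R) :
    ∀ n, ∀ b ∈ BB N σ R n, b.radius = rad R n ∧ b.toSet ⊆ (unitBox N).toSet := by
  intro n
  induction n with
  | zero =>
    intro b hb
    rw [BB_zero, Finset.mem_singleton] at hb
    subst hb
    constructor
    · show (unitBox N).radius = rad R 0
      rw [rad]; norm_num [unitBox]
    · exact le_refl _
  | succ n ih =>
    intro b hb
    rw [BB_succ] at hb
    obtain ⟨B', hB', hbS⟩ := Finset.mem_biUnion.1 (Finset.mem_filter.1 hb).1
    have hB'rad := (ih B' hB').1
    constructor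
    · rw [σ.S_radius B' R hRU b hbS, hB'rad, div_eq_iff (by exact_mod_cast hR.ne' : (R:ℝ) ≠ 0)]
      exact (rad_succ_mul hR n).symm
    · exact (σ.S_subset B' R hRU b hbS).trans (ih B' hB').2

/-- Main construction lemma: `Bad_N` is `((d-N+1)/d)`-Cantor-winning on the unit box. -/
lemma badN_cw_main {N : ℕ} (hN : 0 < N) (σ : SplittingStructure (Fin N → ℝ))
    {d : ℝ} (hd : dimH (σ.Ainfty (unitBox N)) = ENNReal.ofReal d)
    (hdgt : (N : ℝ) - 1 < d) :
    σ.CantorWinningOn ((d - (N : ℝ) + 1) / d) (unitBox N) (badN N) := by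
  intro ε hε0 hεlt
  have hN1 : (1:ℝ) ≤ N := by exact_mod_cast hN
  have hd0 : (0:ℝ) < d := by linarith
  have hε1 : ε < 1 := lt_of_lt_of_le hεlt (by rw [div_le_one hd0]; linarith)
  have hη : 0 < d * (1 - ε) - ((N:ℝ) - 1) := by
    have h := (lt_div_iff₀ hd0).1 hεlt
    nlinarith
  set η := d * (1 - ε) - ((N:ℝ) - 1) with hηdef
  set KN : ℝ := (3 * (N:ℝ) + 1) * 2 ^ (N - 1 : ℕ) with hKNdef
  have hKN1 : (1:ℝ) ≤ KN := by
    rw [hKNdef]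
    have h1 : (1:ℝ) ≤ 2 ^ (N - 1 : ℕ) := by exact_mod_cast Nat.one_le_two_pow (n := N - 1)
    nlinarith
  obtain ⟨M₀, hM₀⟩ := exists_nat_gt (max (KN ^ (1/η)) (2 * ((N.factorial:ℝ) + 1)))
  obtain ⟨Rε, hRεU, hRεgt⟩ := σ.U_infinite.exists_gt M₀
  refine ⟨Rε, hRεU, fun R hRU hRεR => ?_⟩
  have hMR : (M₀ : ℝ) < R := by exact_mod_cast lt_of_lt_of_le hRεgt hRεR
  have hfact1 : (1:ℝ) ≤ N.factorial := by exact_mod_cast N.factorial_pos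
  have hRfact : 2 * ((N.factorial:ℝ) + 1) < R :=
    lt_trans (lt_of_le_of_lt (le_max_right _ _) hM₀) hMR
  have hR2ℝ : (2:ℝ) ≤ R := by linarith
  have hR0 : (0:ℝ) < R := by linarith
  have hR : 0 < R := by exact_mod_cast hR0
  have hR2 : 2 ≤ R := by exact_mod_cast hR2ℝ
  have hf1 : (1:ℝ) ≤ σ.f R := by exact_mod_cast σ.f_pos R hRU
  have hfd : (R:ℝ) ^ d ≤ (σ.f R : ℝ) := σ.rpow_le_f (unitBox N) (le_of_eq hd.symm) hRU hR2
  -- the budget bound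
  have hKNR : KN ≤ (R:ℝ) ^ η := by
    have h1 : KN ^ (1/η) ≤ (R:ℝ) := le_of_lt (lt_trans (lt_of_le_of_lt (le_max_left _ _) hM₀) hMR)
    calc KN = (KN ^ (1/η)) ^ η := by
          rw [← Real.rpow_mul (by linarith : (0:ℝ) ≤ KN), one_div,
            inv_mul_cancel₀ hη.ne', Real.rpow_one]
        _ ≤ (R:ℝ) ^ η := Real.rpow_le_rpow (Real.rpow_nonneg (by linarith) _) h1 hη.le
  have hbudget : (((3 * N + 1) * (R + 1) ^ (N - 1) : ℕ) : ℝ) ≤ (σ.f R : ℝ) ^ (1 - ε) := by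
    have h1 : (((3 * N + 1) * (R + 1) ^ (N - 1) : ℕ) : ℝ) ≤ KN * (R:ℝ) ^ (N - 1 : ℕ) := by
      push_cast
      rw [hKNdef]
      have h2 : ((R:ℝ) + 1) ^ (N - 1 : ℕ) ≤ (2 * R) ^ (N - 1 : ℕ) :=
        pow_le_pow_left₀ (by linarith) (by linarith) _
      rw [mul_pow] at h2
      nlinarith [pow_nonneg (show (0:ℝ) ≤ R by linarith) (N - 1 : ℕ),
        pow_nonneg (show (0:ℝ) ≤ 2 by norm_num) (N - 1 : ℕ)]
    have h3 : (R:ℝ) ^ (N - 1 : ℕ) = (R:ℝ) ^ ((N:ℝ) - 1) := by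
      rw [← Real.rpow_natCast (R:ℝ) (N - 1), Nat.cast_sub hN, Nat.cast_one]
    have h4 : KN * (R:ℝ) ^ ((N:ℝ) - 1) ≤ (R:ℝ) ^ η * (R:ℝ) ^ ((N:ℝ) - 1) :=
      mul_le_mul_of_nonneg_right hKNR (Real.rpow_nonneg hR0.le _)
    have h5 : (R:ℝ) ^ η * (R:ℝ) ^ ((N:ℝ) - 1) = (R:ℝ) ^ (d * (1 - ε)) := by
      rw [← Real.rpow_add hR0, hηdef]
      congr 1
      ring
    have h6 : (R:ℝ) ^ (d * (1 - ε)) = ((R:ℝ) ^ d) ^ (1 - ε) := Real.rpow_mul hR0.le _ _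
    have h7 : ((R:ℝ) ^ d) ^ (1 - ε) ≤ (σ.f R : ℝ) ^ (1 - ε) :=
      Real.rpow_le_rpow (Real.rpow_nonneg hR0.le _) hfd (by linarith)
    calc (((3 * N + 1) * (R + 1) ^ (N - 1) : ℕ) : ℝ) ≤ KN * (R:ℝ) ^ (N - 1 : ℕ) := h1
      _ = KN * (R:ℝ) ^ ((N:ℝ) - 1) := by rw [h3]
      _ ≤ (R:ℝ) ^ η * (R:ℝ) ^ ((N:ℝ) - 1) := h4
      _ = (R:ℝ) ^ (d * (1 - ε)) := h5
      _ = ((R:ℝ) ^ d) ^ (1 - ε) := h6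
      _ ≤ (σ.f R : ℝ) ^ (1 - ε) := h7
  -- the generalised Cantor set
  refine ⟨⋂ n, ⋃ b ∈ BB N σ R n, b.toSet, ⟨BB N σ R, BB_zero N σ R, ?_, rfl⟩, ?_⟩
  · -- the removal data
    intro n
    refine ⟨fun k => if k = 0 then
      ((BB N σ R n).biUnion fun B' => σ.S B' R).filter (dang N R n) else ∅, ?_, ?_, ?_⟩
    · intro k hk
      rcases eq_or_ne k 0 with rfl | hk0
      · simp only [if_pos rfl, Nat.sub_zero, zero_add, Finset.prod_range_one]
        exact Finset.filter_subset _ _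
      · simp [if_neg hk0]
    · intro k hk B'' hB''
      rcases eq_or_ne k 0 with rfl | hk0
      · rw [Nat.sub_zero] at hB''
        simp only [if_pos rfl, Nat.sub_zero, zero_add, Finset.prod_range_one]
        have hsub : (((BB N σ R n).biUnion fun B' => σ.S B' R).filter (dang N R n)) ∩
            σ.S B'' R ⊆ (σ.S B'' R).filter (dang N R n) := by
          intro b hb
          rw [Finset.mem_inter] at hb
          exact Finset.mem_filter.2 ⟨hb.2, (Finset.mem_filter.1 hb.1).2⟩
        have hcard : ((((BB N σ R n).biUnion fun B' => σ.S B' R).filter (dang N R n)) ∩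
            σ.S B'' R).card ≤ (3 * N + 1) * (R + 1) ^ (N - 1) :=
          le_trans (Finset.card_le_card hsub)
            (dang_count hN σ hRU hRfact n B'' (BB_inv σ hRU hR n B'' hB'').1)
        have hexp : (((n:ℝ) - ((n:ℕ):ℝ) + 1) * (1 - ε)) = 1 - ε := by ring
        rw [hexp]
        calc (((((BB N σ R n).biUnion fun B' => σ.S B' R).filter (dang N R n)) ∩
              σ.S B'' R).card : ℝ) ≤ (((3 * N + 1) * (R + 1) ^ (N - 1) : ℕ) : ℝ) := by
              exact_mod_cast hcard
          _ ≤ (σ.f R : ℝ) ^ (1 - ε) := hbudget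
      · simp only [if_neg hk0, Finset.empty_inter, Finset.card_empty, Nat.cast_zero]
        exact Real.rpow_nonneg (by positivity) _
    · -- the recursion equation
      have hbi : (Finset.range (n + 1)).biUnion (fun k => if k = 0 then
          ((BB N σ R n).biUnion fun B' => σ.S B' R).filter (dang N R n) else ∅) =
          ((BB N σ R n).biUnion fun B' => σ.S B' R).filter (dang N R n) := by
        ext b
        simp only [Finset.mem_biUnion, Finset.mem_range]
        constructor
        · rintro ⟨k, hk, hb⟩
          rcases eq_or_ne k 0 with rfl | h
          · simpa using hb
          · rw [if_neg h] at hb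
            exact absurd hb (Finset.notMem_empty b)
        · intro hb
          exact ⟨0, by omega, by simpa using hb⟩
      rw [hbi, BB_succ]
      ext b
      simp only [Finset.mem_filter, Finset.mem_sdiff]
      tauto
  · -- the Cantor set consists of badly approximable points
    intro x hx
    refine ⟨rad R 3, rad_pos hR 3, ?_⟩
    intro q hq
    by_contra hcon
    push_neg at hcon
    have hq0 : (0:ℝ) < q := by exact_mod_cast hq
    have hq1 : (1:ℝ) ≤ q := by exact_mod_cast hq
    have hR1 : (1:ℝ) < R := by linarith
    -- find the window
    have hfind : ∃ j : ℕ, (q:ℝ) < Twin N R (j + 1) := by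
      obtain ⟨m, hm⟩ := exists_nat_gt (Real.logb R q * ((N:ℝ) + 1) / N)
      refine ⟨m, ?_⟩
      rw [Twin]
      have hNpos : (0:ℝ) < N := by exact_mod_cast hN
      have h1 : Real.logb R q < ((m:ℝ) + 1) * N / (N + 1) := by
        have ha := (div_lt_iff₀ hNpos).1 hm
        rw [lt_div_iff₀ (by positivity : (0:ℝ) < (N:ℝ)+1)]
        nlinarith
      have h2 : (q:ℝ) = (R:ℝ) ^ (Real.logb R q) := (Real.rpow_logb hR0 (by linarith) hq0).symm
      rw [h2]
      apply Real.rpow_lt_rpow_left_iff hR1 |>.2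
      push_cast
      exact h1
    obtain ⟨j, hj2, hj1⟩ : ∃ j, (q:ℝ) < Twin N R (j + 1) ∧ Twin N R j ≤ (q:ℝ) := by
      refine ⟨Nat.find hfind, Nat.find_spec hfind, ?_⟩
      rcases Nat.eq_zero_or_pos (Nat.find hfind) with hj0 | hjpos
      · rw [hj0, Twin]
        simpa using hq1
      · have hlt := Nat.find_min hfind (Nat.sub_lt hjpos Nat.one_pos)
        push_neg at hlt
        rwa [Nat.sub_add_cancel hjpos] at hlt
    -- the surviving ball at stage j+3
    have hxn := Set.mem_iInter.1 hx (j + 3)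
    simp only [Set.mem_iUnion] at hxn
    obtain ⟨b, hb, hxb⟩ := hxn
    rw [show j + 3 = (j + 2) + 1 by omega, BB_succ] at hb
    have hnd : ¬ dang N R (j + 2) b := (Finset.mem_filter.1 hb).2
    apply hnd
    refine ⟨q, fun i => round ((q:ℝ) * x i), ?_, ?_, ⟨x, ?_, hxb⟩⟩
    · rw [show (j + 2) - 2 = j by omega]
      exact hj1
    · rw [show (j + 2) - 1 = j + 1 by omega]
      exact hj2
    · rw [Metric.mem_closedBall, dist_pi_le_iff
        (mul_nonneg (rad_pos hR 3).le (Real.rpow_nonneg hq0.le _))]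
      intro i
      rw [Real.dist_eq]
      have hi := hcon i
      rw [intDist] at hi
      have key : |x i - (round ((q:ℝ) * x i) : ℝ) / q| =
          |(q:ℝ) * x i - round ((q:ℝ) * x i)| / q := by
        rw [show x i - (round ((q:ℝ) * x i) : ℝ) / q =
          ((q:ℝ) * x i - round ((q:ℝ) * x i)) / q by field_simp, abs_div, abs_of_pos hq0]
      rw [key]
      have h2 : |(q:ℝ) * x i - round ((q:ℝ) * x i)| / q <
          rad R 3 * (q:ℝ) ^ (-(1:ℝ) / (N:ℝ)) / q := by
        gcongr
      have heq : rad R 3 * (q:ℝ) ^ (-(1:ℝ) / (N:ℝ)) / q =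
          rad R 3 * (q:ℝ) ^ (-((N:ℝ) + 1) / N) := by
        rw [mul_div_assoc]
        congr 1
        rw [div_eq_mul_inv ((q:ℝ) ^ _), ← Real.rpow_neg_one (q:ℝ), ← Real.rpow_add hq0]
        congr 1
        have hNne : (N:ℝ) ≠ 0 := by positivity
        field_simp
        ring
      rw [← heq]
      exact h2.le

/-- Each point of a box is inside one of the canonical pieces. -/
lemma piece_cover {N : ℕ} (B : SSBall (Fin N → ℝ)) {u : ℕ} (hu : 0 < u)
    {x : Fin N → ℝ} (hx : x ∈ B.toSet) :
    ∃ i : Fin N → Fin u, x ∈ (canonicalPieceRN N B u hu i).toSet := by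
  have hr : 0 < B.radius := B.radius_pos
  have hu0 : (0:ℝ) < u := by exact_mod_cast hu
  have key : ∀ s : ℝ, 0 ≤ s → s ≤ 2 * B.radius →
      ∃ m : Fin u, |s - (2 * ((m:ℕ):ℝ) + 1) * (B.radius / u)| ≤ B.radius / u := by
    intro s hs0 hs2
    set r := B.radius
    set m0 := ⌊s * u / (2 * r)⌋₊ with hm0
    rcases le_or_gt m0 (u - 1) with hcase | hcase
    · refine ⟨⟨m0, by omega⟩, ?_⟩
      have h1 : (m0 : ℝ) ≤ s * u / (2 * r) := Nat.floor_le (by positivity)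
      have h2 : s * u / (2 * r) < (m0 : ℝ) + 1 := Nat.lt_floor_add_one _
      rw [le_div_iff₀ (by positivity : (0:ℝ) < 2 * r)] at h1
      rw [div_lt_iff₀ (by positivity : (0:ℝ) < 2 * r)] at h2
      rw [abs_le]
      constructor
      · rw [le_sub_iff_add_le, div_eq_mul_inv]
        rw [show -(r * (↑u)⁻¹) + (2 * ((m0:ℕ):ℝ) + 1) * (r * (↑u)⁻¹)
          = (m0:ℝ) * (2 * r) * (↑u)⁻¹ by ring]
        rw [show s = s * u * (↑u)⁻¹ by field_simp]
        exact mul_le_mul_of_nonneg_right h1 (by positivity)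
      · rw [sub_le_iff_le_add, div_eq_mul_inv]
        rw [show r * (↑u)⁻¹ + (2 * ((m0:ℕ):ℝ) + 1) * (r * (↑u)⁻¹)
          = (((m0:ℝ) + 1) * (2 * r)) * (↑u)⁻¹ by ring]
        rw [show s = s * u * (↑u)⁻¹ by field_simp]
        exact mul_le_mul_of_nonneg_right h2.le (by positivity)
    · refine ⟨⟨u - 1, by omega⟩, ?_⟩
      have h1 : (u:ℝ) ≤ s * u / (2 * r) := by
        have : u ≤ m0 := by omega
        calc (u:ℝ) ≤ (m0:ℝ) := by exact_mod_cast this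
          _ ≤ s * u / (2 * r) := Nat.floor_le (by positivity)
      rw [le_div_iff₀ (by positivity : (0:ℝ) < 2 * r)] at h1
      have hs : s = 2 * r := by nlinarith
      have hcast : (((u:ℕ) - 1 : ℕ) : ℝ) = (u:ℝ) - 1 := by
        rw [Nat.cast_sub hu, Nat.cast_one]
      rw [hs]
      rw [show ((⟨u - 1, by omega⟩ : Fin u) : ℕ) = u - 1 from rfl, hcast]
      rw [show 2 * r - (2 * ((u:ℝ) - 1) + 1) * (r / u) = r / u by field_simp; ring]
      rw [abs_of_nonneg (by positivity)]
  have hxco : ∀ j, 0 ≤ x j - (B.center j - B.radius) ∧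
      x j - (B.center j - B.radius) ≤ 2 * B.radius := by
    intro j
    have h1 : |x j - B.center j| ≤ B.radius := by
      calc |x j - B.center j| = dist (x j) (B.center j) := Real.dist_eq _ _
        _ ≤ dist x B.center := dist_le_pi_dist _ _ _
        _ ≤ B.radius := Metric.mem_closedBall.1 hx
    rw [abs_le] at h1
    constructor <;> linarith [h1.1, h1.2]
  choose i hi using fun j => key (x j - (B.center j - B.radius)) (hxco j).1 (hxco j).2
  refine ⟨i, ?_⟩
  rw [SSBall.toSet, Metric.mem_closedBall, dist_pi_le_iff (canonicalPieceRN N B u hu i).radius_pos.le]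
  intro j
  rw [Real.dist_eq]
  have := hi j
  rw [show x j - (canonicalPieceRN N B u hu i).center j =
    x j - (B.center j - B.radius) - (2 * ((i j : ℕ):ℝ) + 1) *
      (B.radius / u) from by simp only [canonicalPieceRN]; ring]
  exact this

/-- For the canonical splitting structure, `A_∞` of the unit box is the whole box. -/
lemma canonical_dim {N : ℕ} (hN : 0 < N) (σ : SplittingStructure (Fin N → ℝ))
    (hcan : IsCanonicalRN N σ) :
    dimH (σ.Ainfty (unitBox N)) = (N : ENNReal) := by
  obtain ⟨hU, hf, hS⟩ := hcan
  have hsub : (unitBox N).toSet ⊆ σ.Ainfty (unitBox N) := by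
    intro x hx
    rw [SplittingStructure.Ainfty, Set.mem_iInter₂]
    intro u huU
    have hu : 0 < u := by rw [hU] at huU; exact huU
    obtain ⟨i, hi⟩ := piece_cover (unitBox N) hu hx
    rw [SplittingStructure.Au, Set.mem_iUnion₂]
    refine ⟨canonicalPieceRN N (unitBox N) u hu i, ?_, hi⟩
    rw [hS (unitBox N) u hu]
    exact Finset.mem_image_of_mem _ (Finset.mem_univ i)
  have hlow : (N : ENNReal) ≤ dimH (σ.Ainfty (unitBox N)) := by
    have h1 : dimH (unitBox N).toSet = (N : ENNReal) := by
      have h2 : (unitBox N).toSet ∈ nhds (unitBox N).center :=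
        Metric.closedBall_mem_nhds _ (unitBox N).radius_pos
      rw [Real.dimH_of_mem_nhds h2, Module.finrank_fin_fun]
    rw [← h1]
    exact dimH_mono hsub
  have hup : dimH (σ.Ainfty (unitBox N)) ≤ (N : ENNReal) := by
    have := dimH_mono (Set.subset_univ (σ.Ainfty (unitBox N)))
    rwa [Real.dimH_univ_pi_fin] at this
  exact le_antisymm hup hlow


/-- For any splitting structure on `ℝ^N` (sup-norm metric) with
`d = dimH A_∞(B) > N - 1` for the unit box `B = [0,1]^N`, the set `Bad_N` is
`((d-N+1)/d)`-Cantor-winning on `B`; in particular, for the canonical splitting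
structure `Bad_N` is `(1/N)`-Cantor-winning on `B`. -/
theorem badN_cantorWinning (N : ℕ) (hN : 0 < N)
    (σ : SplittingStructure (Fin N → ℝ))
    (d : ℝ) (hd : dimH (σ.Ainfty (unitBox N)) = ENNReal.ofReal d)
    (hdgt : (N : ℝ) - 1 < d) :
    σ.CantorWinningOn ((d - (N : ℝ) + 1) / d) (unitBox N) (badN N) ∧
    (IsCanonicalRN N σ →
      σ.CantorWinningOn (1 / (N : ℝ)) (unitBox N) (badN N)) := by

  have hmain := badN_cw_main hN σ hd hdgt
  refine ⟨hmain, fun hcan => ?_⟩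
  have hNd : d = N := by
    have h1 := canonical_dim hN σ hcan
    rw [hd] at h1
    have h2 : ((N:ℕ) : ENNReal) = ENNReal.ofReal ((N:ℕ):ℝ) := by
      rw [ENNReal.ofReal_natCast]
    rw [h2] at h1
    have hd0 : (0:ℝ) ≤ d := by
      have : (0:ℝ) ≤ (N:ℝ) - 1 := by
        have : (1:ℝ) ≤ N := by exact_mod_cast hN
        linarith
      linarith
    exact (ENNReal.ofReal_eq_ofReal_iff hd0 (by positivity)).1 h1
  have heq : (d - (N : ℝ) + 1) / d = 1 / (N : ℝ) := by
    rw [hNd]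
    congr 1
    ring
  rw [← heq]
  exact hmain
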